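/- arXiv:1712.03310 — 2 statements merged into one kernel-verified Lean document; each statement's English description precedes it below -/
import Mathlib

section
/- Let P_U ∈ ℝ^{m₁×m₁} and P_V ∈ ℝ^{m₂×m₂} be orthogonal projection matrices, let 1 ≤ R, and let R_i, R_j ∈ ℝ^{m₁×R} and S_i, S_j ∈ ℝ^{m₂×R} be R-frames. Define masks A_i = R^{-1/2} R_i S_iᵀ and A_j = R^{-1/2} R_j S_jᵀ. Then |⟨P_U A_i P_V, P_U A_j P_V⟩_F| ≤ (1/2) { ‖(P_U R_i)ᵀ(P_U R_j)‖₂² + ‖(P_V S_i)ᵀ(P_V S_j)‖₂² }. -/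
open Matrix

/-- The spectral norm (largest singular value) of a real matrix, i.e. the operator norm
of the induced linear map between Euclidean spaces. -/
noncomputable def specNorm {a b : ℕ} (M : Matrix (Fin a) (Fin b) ℝ) : ℝ :=
  ‖LinearMap.toContinuousLinearMap (Matrix.toEuclideanLin M)‖

lemma col_sq_le_specNorm_sq {a b : ℕ} (M : Matrix (Fin a) (Fin b) ℝ) (k : Fin b) :
    ∑ i, (M i k) ^ 2 ≤ specNorm M ^ 2 := by
  set L := LinearMap.toContinuousLinearMap (Matrix.toEuclideanLin M) with hL
  have h1 : ‖L (EuclideanSpace.single k 1)‖ ≤ ‖L‖ := by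
    calc ‖L (EuclideanSpace.single k 1)‖ ≤ ‖L‖ * ‖EuclideanSpace.single k (1:ℝ)‖ :=
          L.le_opNorm _
      _ = ‖L‖ := by rw [EuclideanSpace.norm_single]; simp
  have h2 : ‖L (EuclideanSpace.single k 1)‖ ^ 2 = ∑ i, (M i k) ^ 2 := by
    have hv : ∀ i, (L (EuclideanSpace.single k 1)) i = M i k := by
      intro i
      show (Matrix.toEuclideanLin M) (EuclideanSpace.single k 1) i = M i k
      rw [show (EuclideanSpace.single k (1:ℝ))
            = (WithLp.equiv 2 (Fin b → ℝ)).symm (Pi.single k 1) from rfl,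
        Matrix.toEuclideanLin_apply]
      simp [Matrix.mulVec_single]
    rw [EuclideanSpace.norm_eq, Real.sq_sqrt (by positivity)]
    exact Finset.sum_congr rfl fun i _ => by simp [hv i, Real.norm_eq_abs, sq_abs]
  rw [← h2]
  exact pow_le_pow_left₀ (norm_nonneg _) h1 2

lemma frob_sq_le {a b : ℕ} (M : Matrix (Fin a) (Fin b) ℝ) :
    ∑ k : Fin b, ∑ i : Fin a, (M i k) ^ 2 ≤ (b : ℝ) * specNorm M ^ 2 := by
  calc ∑ k : Fin b, ∑ i : Fin a, (M i k) ^ 2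
      ≤ ∑ _k : Fin b, specNorm M ^ 2 :=
        Finset.sum_le_sum fun k _ => col_sq_le_specNorm_sq M k
    _ = (b : ℝ) * specNorm M ^ 2 := by simp [mul_comm]

/-- Let `P_U`, `P_V` be orthogonal projection matrices, `1 ≤ R`, and let
`R_i, R_j ∈ ℝ^{m₁×R}`, `S_i, S_j ∈ ℝ^{m₂×R}` be `R`-frames. For the masks
`A_i = R^{-1/2} R_i S_iᵀ` and `A_j = R^{-1/2} R_j S_jᵀ`,
`|⟨P_U A_i P_V, P_U A_j P_V⟩_F| ≤ (1/2) (‖(P_U R_i)ᵀ(P_U R_j)‖₂² + ‖(P_V S_i)ᵀ(P_V S_j)‖₂²)`. -/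
theorem stmt_6 {m₁ m₂ R : ℕ} (hR : 1 ≤ R)
    (PU : Matrix (Fin m₁) (Fin m₁) ℝ) (PV : Matrix (Fin m₂) (Fin m₂) ℝ)
    (hPUsymm : PUᵀ = PU) (hPUidem : PU * PU = PU)
    (hPVsymm : PVᵀ = PV) (hPVidem : PV * PV = PV)
    (Ri Rj : Matrix (Fin m₁) (Fin R) ℝ) (Si Sj : Matrix (Fin m₂) (Fin R) ℝ)
    (hRi : Riᵀ * Ri = 1) (hRj : Rjᵀ * Rj = 1)
    (hSi : Siᵀ * Si = 1) (hSj : Sjᵀ * Sj = 1)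
    (Ai Aj : Matrix (Fin m₁) (Fin m₂) ℝ)
    (hAi : Ai = (Real.sqrt R)⁻¹ • (Ri * Siᵀ))
    (hAj : Aj = (Real.sqrt R)⁻¹ • (Rj * Sjᵀ)) :
    |((PU * Ai * PV)ᵀ * (PU * Aj * PV)).trace| ≤
      (1 / 2) * (specNorm ((PU * Ri)ᵀ * (PU * Rj)) ^ 2 +
        specNorm ((PV * Si)ᵀ * (PV * Sj)) ^ 2) := by
  set X := (PU * Ri)ᵀ * (PU * Rj) with hX
  set Y := (PV * Si)ᵀ * (PV * Sj) with hY
  have hRpos : (0:ℝ) < R := by exact_mod_cast Nat.lt_of_lt_of_le Nat.zero_lt_one hR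
  -- Step 1: the trace identity
  have key : ((PU * Ai * PV)ᵀ * (PU * Aj * PV)).trace = (R:ℝ)⁻¹ * (Yᵀ * X).trace := by
    subst hAi hAj
    have hr : (Real.sqrt R)⁻¹ * (Real.sqrt R)⁻¹ = (R:ℝ)⁻¹ := by
      rw [← mul_inv]
      congr 1
      exact Real.mul_self_sqrt (le_of_lt hRpos)
    have e1 : (PU * ((Real.sqrt R)⁻¹ • (Ri * Siᵀ)) * PV)ᵀ *
        (PU * ((Real.sqrt R)⁻¹ • (Rj * Sjᵀ)) * PV)
        = ((R:ℝ)⁻¹) • ((PU * (Ri * Siᵀ) * PV)ᵀ * (PU * (Rj * Sjᵀ) * PV)) := by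
      rw [Matrix.mul_smul, Matrix.smul_mul, Matrix.mul_smul, Matrix.smul_mul,
        Matrix.transpose_smul, Matrix.smul_mul, Matrix.mul_smul, smul_smul, hr]
    rw [e1, Matrix.trace_smul, smul_eq_mul]
    congr 1
    have hbi : PU * (Ri * Siᵀ) * PV = (PU * Ri) * (PV * Si)ᵀ := by
      rw [Matrix.transpose_mul, hPVsymm]
      simp only [Matrix.mul_assoc]
    have hbj : PU * (Rj * Sjᵀ) * PV = (PU * Rj) * (PV * Sj)ᵀ := by
      rw [Matrix.transpose_mul, hPVsymm]
      simp only [Matrix.mul_assoc]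
    rw [hbi, hbj]
    have hYT : Yᵀ = (PV * Sj)ᵀ * (PV * Si) := by
      rw [hY, Matrix.transpose_mul, Matrix.transpose_transpose]
    calc (((PU * Ri) * (PV * Si)ᵀ)ᵀ * ((PU * Rj) * (PV * Sj)ᵀ)).trace
        = ((PV * Si) * (X * (PV * Sj)ᵀ)).trace := by
          congr 1
          rw [Matrix.transpose_mul, Matrix.transpose_transpose, hX]
          simp only [Matrix.mul_assoc]
      _ = ((X * (PV * Sj)ᵀ) * (PV * Si)).trace := Matrix.trace_mul_comm _ _
      _ = (X * ((PV * Sj)ᵀ * (PV * Si))).trace := by rw [Matrix.mul_assoc]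
      _ = (X * Yᵀ).trace := by rw [hYT]
      _ = (Yᵀ * X).trace := Matrix.trace_mul_comm _ _
  rw [key]
  -- Step 2: the trace as an entrywise sum, and Cauchy–Schwarz
  have tr_eq : (Yᵀ * X).trace = ∑ p : Fin R × Fin R, Y p.2 p.1 * X p.2 p.1 := by
    rw [Fintype.sum_prod_type]
    simp [Matrix.trace, Matrix.diag, Matrix.mul_apply, Matrix.transpose_apply]
  have hXnn : (0:ℝ) ≤ specNorm X := norm_nonneg _
  have hYnn : (0:ℝ) ≤ specNorm Y := norm_nonneg _
  have hXsum : (∑ p : Fin R × Fin R, X p.2 p.1 ^ 2) ≤ (R:ℝ) * specNorm X ^ 2 := by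
    rw [Fintype.sum_prod_type]
    exact frob_sq_le X
  have hYsum : (∑ p : Fin R × Fin R, Y p.2 p.1 ^ 2) ≤ (R:ℝ) * specNorm Y ^ 2 := by
    rw [Fintype.sum_prod_type]
    exact frob_sq_le Y
  have cs : |(Yᵀ * X).trace| ≤ (R:ℝ) * (specNorm X * specNorm Y) := by
    have h1 : ((Yᵀ * X).trace) ^ 2 ≤
        (∑ p : Fin R × Fin R, Y p.2 p.1 ^ 2) * (∑ p : Fin R × Fin R, X p.2 p.1 ^ 2) := by
      rw [tr_eq]
      exact Finset.sum_mul_sq_le_sq_mul_sq Finset.univ (fun p : Fin R × Fin R => Y p.2 p.1)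
        (fun p : Fin R × Fin R => X p.2 p.1)
    have hXsnn : (0:ℝ) ≤ ∑ p : Fin R × Fin R, X p.2 p.1 ^ 2 :=
      Finset.sum_nonneg fun _ _ => sq_nonneg _
    have h2 : ((Yᵀ * X).trace) ^ 2 ≤ ((R:ℝ) * (specNorm X * specNorm Y)) ^ 2 := by
      calc ((Yᵀ * X).trace) ^ 2
          ≤ (∑ p : Fin R × Fin R, Y p.2 p.1 ^ 2) * (∑ p : Fin R × Fin R, X p.2 p.1 ^ 2) := h1
        _ ≤ ((R:ℝ) * specNorm Y ^ 2) * ((R:ℝ) * specNorm X ^ 2) := by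
            apply mul_le_mul hYsum hXsum hXsnn
            positivity
        _ = ((R:ℝ) * (specNorm X * specNorm Y)) ^ 2 := by ring
    have hb : (0:ℝ) ≤ (R:ℝ) * (specNorm X * specNorm Y) := by positivity
    calc |(Yᵀ * X).trace| = Real.sqrt (((Yᵀ * X).trace) ^ 2) := (Real.sqrt_sq_eq_abs _).symm
      _ ≤ Real.sqrt (((R:ℝ) * (specNorm X * specNorm Y)) ^ 2) := Real.sqrt_le_sqrt h2
      _ = (R:ℝ) * (specNorm X * specNorm Y) := Real.sqrt_sq hb
  rw [abs_mul, abs_of_nonneg (inv_nonneg.mpr hRpos.le)]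
  calc (R:ℝ)⁻¹ * |(Yᵀ * X).trace|
      ≤ (R:ℝ)⁻¹ * ((R:ℝ) * (specNorm X * specNorm Y)) :=
        mul_le_mul_of_nonneg_left cs (inv_nonneg.mpr hRpos.le)
    _ = specNorm X * specNorm Y := by field_simp
    _ ≤ (1 / 2) * (specNorm X ^ 2 + specNorm Y ^ 2) := by
        nlinarith [sq_nonneg (specNorm X - specNorm Y)]
end

section
/- Let U ∈ ℝ^{m₁×R} and V ∈ ℝ^{m₂×R} satisfy UᵀU = I_R and VᵀV = I_R, and set P_U = UUᵀ, P_V = VVᵀ. Let A_1, …, A_n ∈ ℝ^{m₁×m₂}, let γ² > 0, set M = R_n + γ² I where (R_n)_{i,j} = ⟨P_U A_i P_V, P_U A_j P_V⟩_F, and for A ∈ ℝ^{m₁×m₂} set r(A) = ( ⟨P_U A_i P_V, P_U A P_V⟩_F )_{i=1}^n and F(A) = ‖P_U A P_V‖_F² − r(A)ᵀ M^{-1} r(A). Let D ∈ ℝ^{n×R²} be the matrix whose i-th row is vec(Σ_i)ᵀ with Σ_i = Uᵀ A_i V, and let ν* ∈ ℝ^{R²} be a unit eigenvector of the symmetric positive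 semidefinite matrix Dᵀ M^{-1} D corresponding to its smallest eigenvalue λ_min. Define Σ* ∈ ℝ^{R×R} by vec(Σ*) = ν* and A* = U Σ* Vᵀ. Then ‖A*‖_F = 1, F(A*) = 1 − λ_min, and F(A) ≤ F(A*) for every A ∈ ℝ^{m₁×m₂} with ‖A‖_F ≤ 1. -/
open Matrix

/-- (Sequential mask construction, Theorem on the optimal sequential mask.)
Let `U ∈ ℝ^{m₁×R}`, `V ∈ ℝ^{m₂×R}` have orthonormal columns, `P_U = UUᵀ`, `P_V = VVᵀ`.
Let `M = R_n + γ² I` with `(R_n)_{i,j} = ⟨P_U A_i P_V, P_U A_j P_V⟩_F`, and for a mask `B`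
let `r(B)_i = ⟨P_U A_i P_V, P_U B P_V⟩_F` and
`F(B) = ‖P_U B P_V‖_F² − r(B)ᵀ M⁻¹ r(B)`. Let `D ∈ ℝ^{n×R²}` have `i`-th row
`vec(Σ_i)ᵀ` with `Σ_i = Uᵀ A_i V`, and let `ν*` be a unit eigenvector of `Dᵀ M⁻¹ D`
for its smallest eigenvalue `λ_min`. With `vec(Σ*) = ν*` and `A* = U Σ* Vᵀ`:
`‖A*‖_F = 1`, `F(A*) = 1 − λ_min`, and `F(B) ≤ F(A*)` for every `B` with `‖B‖_F ≤ 1`. -/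
theorem stmt_14 {m₁ m₂ R n : ℕ}
    (U : Matrix (Fin m₁) (Fin R) ℝ) (V : Matrix (Fin m₂) (Fin R) ℝ)
    (hU : Uᵀ * U = 1) (hV : Vᵀ * V = 1)
    (A : Fin n → Matrix (Fin m₁) (Fin m₂) ℝ)
    (γ2 : ℝ) (hγ2 : 0 < γ2)
    (M : Matrix (Fin n) (Fin n) ℝ)
    (hM : M = Matrix.of (fun i j =>
        (((U * Uᵀ) * A i * (V * Vᵀ))ᵀ * ((U * Uᵀ) * A j * (V * Vᵀ))).trace) +
      γ2 • (1 : Matrix (Fin n) (Fin n) ℝ))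
    (r : Matrix (Fin m₁) (Fin m₂) ℝ → Fin n → ℝ)
    (hr : ∀ B i, r B i =
      (((U * Uᵀ) * A i * (V * Vᵀ))ᵀ * ((U * Uᵀ) * B * (V * Vᵀ))).trace)
    (F : Matrix (Fin m₁) (Fin m₂) ℝ → ℝ)
    (hF : ∀ B, F B =
      (((U * Uᵀ) * B * (V * Vᵀ))ᵀ * ((U * Uᵀ) * B * (V * Vᵀ))).trace -
        r B ⬝ᵥ M⁻¹.mulVec (r B))
    (D : Matrix (Fin n) (Fin R × Fin R) ℝ)
    (hD : ∀ i kl, D i kl = (Uᵀ * A i * V) kl.1 kl.2)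
    (ν : Fin R × Fin R → ℝ) (hν : ν ⬝ᵥ ν = 1)
    (lammin : ℝ)
    (heig : (Dᵀ * M⁻¹ * D).mulVec ν = lammin • ν)
    (hmin : ∀ (μ : ℝ) (w : Fin R × Fin R → ℝ), w ≠ 0 →
      (Dᵀ * M⁻¹ * D).mulVec w = μ • w → lammin ≤ μ)
    (Sstar : Matrix (Fin R) (Fin R) ℝ) (hS : ∀ k l, Sstar k l = ν (k, l)) :
    Real.sqrt (((U * Sstar * Vᵀ)ᵀ * (U * Sstar * Vᵀ)).trace) = 1 ∧
    F (U * Sstar * Vᵀ) = 1 - lammin ∧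
    (∀ B : Matrix (Fin m₁) (Fin m₂) ℝ,
      Real.sqrt ((Bᵀ * B).trace) ≤ 1 → F B ≤ F (U * Sstar * Vᵀ)) := by
  classical
  set G := Dᵀ * M⁻¹ * D with hG
  set v : Matrix (Fin m₁) (Fin m₂) ℝ → (Fin R × Fin R → ℝ) :=
    fun B kl => (Uᵀ * B * V) kl.1 kl.2 with hv
  -- basic trace identity
  have htr : ∀ S T : Matrix (Fin R) (Fin R) ℝ,
      ((U * S * Vᵀ)ᵀ * (U * T * Vᵀ)).trace
        = (fun kl : Fin R × Fin R => S kl.1 kl.2) ⬝ᵥ (fun kl => T kl.1 kl.2) := by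
    intro S T
    have e1 : (U * S * Vᵀ)ᵀ * (U * T * Vᵀ) = V * (Sᵀ * ((Uᵀ * U) * (T * Vᵀ))) := by
      simp only [transpose_mul, transpose_transpose, Matrix.mul_assoc]
    rw [e1, hU, Matrix.one_mul, Matrix.trace_mul_comm]
    have e2 : (Sᵀ * (T * Vᵀ)) * V = Sᵀ * T * (Vᵀ * V) := by
      simp only [Matrix.mul_assoc]
    rw [e2, hV, Matrix.mul_one]
    simp only [dotProduct, Fintype.sum_prod_type, Matrix.trace, Matrix.diag,
      Matrix.mul_apply, Matrix.transpose_apply]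
    exact Finset.sum_comm
  have hassoc : ∀ B : Matrix (Fin m₁) (Fin m₂) ℝ,
      (U * Uᵀ) * B * (V * Vᵀ) = U * (Uᵀ * B * V) * Vᵀ := fun B => by
    simp only [Matrix.mul_assoc]
  have key : ∀ B C : Matrix (Fin m₁) (Fin m₂) ℝ,
      (((U * Uᵀ) * B * (V * Vᵀ))ᵀ * ((U * Uᵀ) * C * (V * Vᵀ))).trace = v B ⬝ᵥ v C := by
    intro B C
    rw [hassoc B, hassoc C, htr]
  -- r in terms of D
  have hrD : ∀ B, r B = D.mulVec (v B) := by
    intro B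
    funext i
    rw [hr, key]
    simp only [Matrix.mulVec, dotProduct, hv, hD]
  -- F in terms of v and G
  have hFv : ∀ B, F B = v B ⬝ᵥ v B - v B ⬝ᵥ G.mulVec (v B) := by
    intro B
    rw [hF, key, hrD]
    congr 1
    rw [hG, Matrix.mul_assoc, ← Matrix.mulVec_mulVec, Matrix.dotProduct_mulVec (v B),
      Matrix.vecMul_transpose, Matrix.mulVec_mulVec]
  -- M = D Dᵀ + γ2 I
  have hMD : M = D * Dᵀ + γ2 • 1 := by
    rw [hM]
    congr 1
    ext i j
    rw [Matrix.of_apply, key]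
    simp only [Matrix.mul_apply, dotProduct, hv, hD, Matrix.transpose_apply]
  -- M is positive definite hence invertible
  have hMpd : M.PosDef := by
    rw [hMD]
    refine Matrix.PosDef.posSemidef_add ?_ ?_
    · have := Matrix.posSemidef_self_mul_conjTranspose D
      rwa [Matrix.conjTranspose_eq_transpose_of_trivial] at this
    · rw [Matrix.smul_one_eq_diagonal]
      exact Matrix.posDef_diagonal_iff.mpr fun _ => hγ2
  have hMdet : IsUnit M.det := hMpd.det_pos.ne'.isUnit
  have hMMinv : M * M⁻¹ = 1 := Matrix.mul_nonsing_inv M hMdet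
  have hMsymm : Mᵀ = M := by
    rw [hMD]
    simp [Matrix.transpose_add, Matrix.transpose_mul, Matrix.transpose_smul]
  -- the quadratic bound x⬝Gx ≤ x⬝x
  have hGle : ∀ x : Fin R × Fin R → ℝ, x ⬝ᵥ G.mulVec x ≤ x ⬝ᵥ x := by
    intro x
    set w := M⁻¹.mulVec (D.mulVec x) with hw
    have hq : x ⬝ᵥ G.mulVec x = D.mulVec x ⬝ᵥ w := by
      rw [hG, Matrix.mul_assoc, ← Matrix.mulVec_mulVec, Matrix.dotProduct_mulVec x,
        Matrix.vecMul_transpose, ← Matrix.mulVec_mulVec, hw]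
    have hMw : M.mulVec w = D.mulVec x := by
      rw [hw, Matrix.mulVec_mulVec, hMMinv, Matrix.one_mulVec]
    have hcross : x ⬝ᵥ Dᵀ.mulVec w = D.mulVec x ⬝ᵥ w := by
      rw [Matrix.dotProduct_mulVec x, Matrix.vecMul_transpose]
    have hDDw : D.mulVec (Dᵀ.mulVec w) = D.mulVec x - γ2 • w := by
      rw [Matrix.mulVec_mulVec]
      have hDD : D * Dᵀ = M - γ2 • 1 := by rw [hMD]; abel
      rw [hDD, Matrix.sub_mulVec, hMw, Matrix.smul_mulVec, Matrix.one_mulVec]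
    have hDTw : Dᵀ.mulVec w ⬝ᵥ Dᵀ.mulVec w = D.mulVec x ⬝ᵥ w - γ2 * (w ⬝ᵥ w) := by
      rw [Matrix.dotProduct_mulVec, Matrix.vecMul_transpose, hDDw, sub_dotProduct,
        smul_dotProduct, smul_eq_mul]
    have hid : (x - Dᵀ.mulVec w) ⬝ᵥ (x - Dᵀ.mulVec w) + γ2 * (w ⬝ᵥ w)
        = x ⬝ᵥ x - x ⬝ᵥ G.mulVec x := by
      rw [hq, sub_dotProduct, dotProduct_sub, dotProduct_sub,
        hDTw, hcross, dotProduct_comm (Dᵀ.mulVec w) x, hcross]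
      ring
    have h0 : 0 ≤ (x - Dᵀ.mulVec w) ⬝ᵥ (x - Dᵀ.mulVec w) :=
      Finset.sum_nonneg fun i _ => mul_self_nonneg _
    have h1 : 0 ≤ γ2 * (w ⬝ᵥ w) :=
      mul_nonneg hγ2.le (Finset.sum_nonneg fun i _ => mul_self_nonneg _)
    linarith
  -- G is symmetric
  have hGt : Gᵀ = G := by
    rw [hG]
    simp only [Matrix.transpose_mul, Matrix.transpose_transpose, Matrix.transpose_nonsing_inv,
      hMsymm, Matrix.mul_assoc]
  have hGsymm : G.IsHermitian := by
    rw [Matrix.IsHermitian, Matrix.conjTranspose_eq_transpose_of_trivial, hGt]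
  -- Rayleigh lower bound from the minimal eigenvalue
  have hray : ∀ x : Fin R × Fin R → ℝ, lammin * (x ⬝ᵥ x) ≤ x ⬝ᵥ G.mulVec x := by
    intro x
    set b := hGsymm.eigenvectorBasis with hb
    set lam := hGsymm.eigenvalues with hlamdef
    have hcoe : ∀ u : EuclideanSpace ℝ (Fin R × Fin R),
        (WithLp.equiv 2 ((_ : Fin R × Fin R) → ℝ)) u = u := fun _ => rfl
    have hcoe2 : ∀ u : Fin R × Fin R → ℝ,
        (WithLp.equiv 2 ((_ : Fin R × Fin R) → ℝ)).symm u = u := fun _ => rfl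
    have hbe : ∀ i, G.mulVec (b i) = lam i • (b i) := fun i =>
      hGsymm.mulVec_eigenvectorBasis i
    have hlam : ∀ i, lammin ≤ lam i := by
      intro i
      refine hmin (lam i) (b i) ?_ (hbe i)
      have hne := b.orthonormal.ne_zero i
      intro h
      exact hne (by ext j; exact congrFun h j)
    have hsum : ∀ y z : Fin R × Fin R → ℝ,
        y ⬝ᵥ z = ∑ i, (y ⬝ᵥ (b i : Fin R × Fin R → ℝ)) * ((b i : Fin R × Fin R → ℝ) ⬝ᵥ z) := by
      intro y z
      have h := b.sum_inner_mul_inner ((WithLp.equiv 2 _).symm y) ((WithLp.equiv 2 _).symm z)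
      simp only [EuclideanSpace.inner_eq_star_dotProduct, star_trivial, hcoe, hcoe2] at h
      rw [dotProduct_comm y z, ← h]
      exact Finset.sum_congr rfl fun i _ => by rw [dotProduct_comm _ y, dotProduct_comm z]
    have hGx : ∀ i, (b i : Fin R × Fin R → ℝ) ⬝ᵥ G.mulVec x
        = lam i * ((b i : Fin R × Fin R → ℝ) ⬝ᵥ x) := by
      intro i
      rw [Matrix.dotProduct_mulVec, ← hGt, Matrix.vecMul_transpose, hbe i,
        smul_dotProduct, smul_eq_mul]
    have hx1 : x ⬝ᵥ x = ∑ i, (x ⬝ᵥ (b i : Fin R × Fin R → ℝ)) ^ 2 := by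
      rw [hsum x x]
      refine Finset.sum_congr rfl fun i _ => ?_
      rw [dotProduct_comm (b i : Fin R × Fin R → ℝ) x, sq]
    have hx2 : x ⬝ᵥ G.mulVec x = ∑ i, lam i * (x ⬝ᵥ (b i : Fin R × Fin R → ℝ)) ^ 2 := by
      rw [hsum x (G.mulVec x)]
      refine Finset.sum_congr rfl fun i _ => ?_
      rw [hGx i, dotProduct_comm (b i : Fin R × Fin R → ℝ) x]
      ring
    rw [hx1, hx2, Finset.mul_sum]
    exact Finset.sum_le_sum fun i _ => mul_le_mul_of_nonneg_right (hlam i) (sq_nonneg _)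
  -- value at the candidate
  have hvs : v (U * Sstar * Vᵀ) = ν := by
    funext kl
    obtain ⟨k, l⟩ := kl
    have e : Uᵀ * (U * Sstar * Vᵀ) * V = Sstar := by
      calc Uᵀ * (U * Sstar * Vᵀ) * V = (Uᵀ * U) * (Sstar * (Vᵀ * V)) := by
            simp only [Matrix.mul_assoc]
        _ = Sstar := by rw [hU, hV, Matrix.one_mul, Matrix.mul_one]
    simp only [hv, e, hS]
  have hnustar : ∀ kl : Fin R × Fin R, Sstar kl.1 kl.2 = ν kl := fun kl => by
    rw [hS]
  -- nonnegativity of traces of Gram matrices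
  have trnn : ∀ X : Matrix (Fin m₁) (Fin m₂) ℝ, 0 ≤ (Xᵀ * X).trace := by
    intro X
    rw [Matrix.trace]
    refine Finset.sum_nonneg fun j _ => ?_
    rw [Matrix.diag_apply, Matrix.mul_apply]
    simp only [Matrix.transpose_apply]
    exact Finset.sum_nonneg fun i _ => mul_self_nonneg _
  -- projections
  have hPproj : (U * Uᵀ) * (U * Uᵀ) = U * Uᵀ := by
    calc (U * Uᵀ) * (U * Uᵀ) = U * ((Uᵀ * U) * Uᵀ) := by simp only [Matrix.mul_assoc]
      _ = U * Uᵀ := by rw [hU, Matrix.one_mul]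
  have hQproj : (V * Vᵀ) * (V * Vᵀ) = V * Vᵀ := by
    calc (V * Vᵀ) * (V * Vᵀ) = V * ((Vᵀ * V) * Vᵀ) := by simp only [Matrix.mul_assoc]
      _ = V * Vᵀ := by rw [hV, Matrix.one_mul]
  have hPt : (U * Uᵀ)ᵀ = U * Uᵀ := by
    rw [Matrix.transpose_mul, Matrix.transpose_transpose]
  have hQt : (V * Vᵀ)ᵀ = V * Vᵀ := by
    rw [Matrix.transpose_mul, Matrix.transpose_transpose]
  -- contraction, right projection
  have step_right : ∀ C : Matrix (Fin m₁) (Fin m₂) ℝ,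
      ((C * (V * Vᵀ))ᵀ * (C * (V * Vᵀ))).trace ≤ (Cᵀ * C).trace := by
    intro C
    set Q := V * Vᵀ with hQdef
    have h1Qproj : (1 - Q) * (1 - Q) = 1 - Q := by
      rw [hQdef]
      simp [Matrix.sub_mul, Matrix.mul_sub, hQproj, ← hQdef]
    have e : (C * Q)ᵀ * (C * Q) = Q * ((Cᵀ * C) * Q) := by
      rw [Matrix.transpose_mul, hQt]
      simp only [Matrix.mul_assoc]
    rw [e, Matrix.trace_mul_comm Q ((Cᵀ * C) * Q)]
    have e2 : ((Cᵀ * C) * Q) * Q = Cᵀ * C * Q := by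
      rw [Matrix.mul_assoc, hQproj]
    rw [e2]
    have e3 : (Cᵀ * C).trace - (Cᵀ * C * Q).trace
        = ((C * (1 - Q))ᵀ * (C * (1 - Q))).trace := by
      have h1Qt : (1 - Q)ᵀ = 1 - Q := by
        rw [Matrix.transpose_sub, Matrix.transpose_one, hQt]
      have e4 : (C * (1 - Q))ᵀ * (C * (1 - Q)) = (1 - Q) * ((Cᵀ * C) * (1 - Q)) := by
        rw [Matrix.transpose_mul, h1Qt]
        simp only [Matrix.mul_assoc]
      rw [e4, Matrix.trace_mul_comm (1 - Q) ((Cᵀ * C) * (1 - Q))]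
      have e5 : ((Cᵀ * C) * (1 - Q)) * (1 - Q) = Cᵀ * C * (1 - Q) := by
        rw [Matrix.mul_assoc, h1Qproj]
      rw [e5, Matrix.mul_sub, Matrix.mul_one, Matrix.trace_sub]
    have := trnn (C * (1 - Q))
    linarith
  -- contraction, left projection
  have step_left : ∀ C : Matrix (Fin m₁) (Fin m₂) ℝ,
      (((U * Uᵀ) * C)ᵀ * ((U * Uᵀ) * C)).trace ≤ (Cᵀ * C).trace := by
    intro C
    set P := U * Uᵀ with hPdef
    have h1Pproj : (1 - P) * (1 - P) = 1 - P := by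
      rw [hPdef]
      simp [Matrix.sub_mul, Matrix.mul_sub, hPproj, ← hPdef]
    have e : (P * C)ᵀ * (P * C) = Cᵀ * (P * C) := by
      rw [Matrix.transpose_mul, hPt, Matrix.mul_assoc]
      congr 1
      rw [← Matrix.mul_assoc, hPproj]
    rw [e]
    have e3 : (Cᵀ * C).trace - (Cᵀ * (P * C)).trace
        = (((1 - P) * C)ᵀ * ((1 - P) * C)).trace := by
      have h1Pt : (1 - P)ᵀ = 1 - P := by
        rw [Matrix.transpose_sub, Matrix.transpose_one, hPt]
      have e4 : ((1 - P) * C)ᵀ * ((1 - P) * C) = Cᵀ * ((1 - P) * C) := by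
        rw [Matrix.transpose_mul, h1Pt, Matrix.mul_assoc]
        congr 1
        rw [← Matrix.mul_assoc, h1Pproj]
      rw [e4, Matrix.sub_mul, Matrix.one_mul, Matrix.mul_sub, Matrix.trace_sub]
    have := trnn ((1 - P) * C)
    linarith
  -- full contraction
  have hcontr : ∀ B : Matrix (Fin m₁) (Fin m₂) ℝ,
      v B ⬝ᵥ v B ≤ (Bᵀ * B).trace := by
    intro B
    rw [← key B B]
    have e : (U * Uᵀ) * B * (V * Vᵀ) = (U * Uᵀ) * (B * (V * Vᵀ)) := by
      rw [Matrix.mul_assoc]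
    rw [e]
    exact le_trans (step_left (B * (V * Vᵀ))) (step_right B)
  -- value of the quadratic form at ν
  have hGnu : ν ⬝ᵥ G.mulVec ν = lammin := by
    rw [heig, dotProduct_smul, smul_eq_mul, hν, mul_one]
  have h1m : 0 ≤ 1 - lammin := by
    have := hGle ν
    rw [hGnu, hν] at this
    linarith
  have hFstar : F (U * Sstar * Vᵀ) = 1 - lammin := by
    rw [hFv, hvs, hν, hGnu]
  refine ⟨?_, hFstar, ?_⟩
  · have e : ((U * Sstar * Vᵀ)ᵀ * (U * Sstar * Vᵀ)).trace = 1 := by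
      rw [htr]
      have e2 : (fun kl : Fin R × Fin R => Sstar kl.1 kl.2) = ν := funext hnustar
      rw [e2, hν]
    rw [e, Real.sqrt_one]
  · intro B hB
    have htB : 0 ≤ (Bᵀ * B).trace := trnn B
    have hB1 : (Bᵀ * B).trace ≤ 1 := by
      nlinarith [Real.sq_sqrt htB, Real.sqrt_nonneg ((Bᵀ * B).trace)]
    have ht1 : v B ⬝ᵥ v B ≤ 1 := le_trans (hcontr B) hB1
    have h3 := hray (v B)
    rw [hFv, hFstar]
    nlinarith [mul_nonneg h1m (sub_nonneg.mpr ht1)]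
end
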